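/- Let H be a complex Hilbert space, Λ a countable index set, and (m_λ)_{λ∈Λ} a frame for H with frame constants 0 < a ≤ b < ∞. Let (m̃_λ)_{λ∈Λ} be the canonical dual frame, m̃_λ = S^{-1} m_λ where S is the frame operator Sf = Σ_λ ⟨f, m_λ⟩ m_λ. Then the Moore-Penrose pseudoinverse of the Gramian (⟨m_λ, m_{λ'}⟩)_{λ,λ'∈Λ}, as a bounded operator on ℓ²(Λ), is given by the dual Gramian (⟨m̃_λ, m̃_{λ'}⟩)_{λ,λ'∈Λ}. -/

import Mathlib

open ContinuousLinearMap
open scoped ComplexConjugate ENNReal NNReal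

set_option maxHeartbeats 1000000 in
/-- Pseudoinverse of the Gramian (part of Lemma 3.8): let `(m_λ)_{λ∈Λ}` be a frame for a
complex Hilbert space `H` with frame constants `0 < a ≤ b`, `S` its frame operator
`Sf = Σ_λ ⟨f, m_λ⟩ m_λ`, and `m̃_λ = S⁻¹ m_λ` the canonical dual frame.  Then the
Moore–Penrose pseudoinverse of the Gramian `G = (⟨m_λ, m_{λ'}⟩)`, as a bounded operator
on `ℓ²(Λ)`, is the dual Gramian `G̃ = (⟨m̃_λ, m̃_{λ'}⟩)`; that is, `G G̃ G = G`,
`G̃ G G̃ = G̃`, and `G G̃`, `G̃ G` are self-adjoint. -/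
theorem stmt_13 {H : Type*} [NormedAddCommGroup H] [InnerProductSpace ℂ H]
    [CompleteSpace H] {Λ : Type*} [Countable Λ]
    (m mt : Λ → H) (a b : ℝ) (ha : 0 < a) (hab : a ≤ b)
    (hsum : ∀ f : H, Summable (fun l : Λ => ‖(inner ℂ f (m l) : ℂ)‖ ^ 2))
    (hframe : ∀ f : H,
      a ^ 2 * ‖f‖ ^ 2 ≤ ∑' l : Λ, ‖(inner ℂ f (m l) : ℂ)‖ ^ 2 ∧
      ∑' l : Λ, ‖(inner ℂ f (m l) : ℂ)‖ ^ 2 ≤ b ^ 2 * ‖f‖ ^ 2)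
    (S : H →L[ℂ] H)
    (hS : ∀ f : H, HasSum (fun l : Λ => (inner ℂ (m l) f : ℂ) • m l) (S f))
    (hmt : ∀ l : Λ, S (mt l) = m l)
    (G Gt : lp (fun _ : Λ => ℂ) 2 →L[ℂ] lp (fun _ : Λ => ℂ) 2)
    (hG : ∀ (c : lp (fun _ : Λ => ℂ) 2) (l : Λ),
      G c l = ∑' l' : Λ, (inner ℂ (m l) (m l') : ℂ) * c l')
    (hGt : ∀ (c : lp (fun _ : Λ => ℂ) 2) (l : Λ),
      Gt c l = ∑' l' : Λ, (inner ℂ (mt l) (mt l') : ℂ) * c l') :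
    G ∘L Gt ∘L G = G ∧ Gt ∘L G ∘L Gt = Gt ∧
      IsSelfAdjoint (G ∘L Gt) ∧ IsSelfAdjoint (Gt ∘L G) := by
  classical
  have hb : 0 < b := lt_of_lt_of_le ha hab
  have h2R : ((2 : ℝ≥0∞)).toReal = ((2 : ℕ) : ℝ) := by norm_num
  have hsum' : ∀ f : H, Summable (fun l : Λ => ‖(inner ℂ (m l) f : ℂ)‖ ^ 2) :=
    fun f => (hsum f).congr fun l => by rw [norm_inner_symm]
  have htsum' : ∀ f : H,
      (∑' l : Λ, ‖(inner ℂ (m l) f : ℂ)‖ ^ 2) = ∑' l : Λ, ‖(inner ℂ f (m l) : ℂ)‖ ^ 2 :=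
    fun f => tsum_congr fun l => by rw [norm_inner_symm]
  -- membership in ℓ²
  have memA : ∀ f : H, Memℓp (fun l : Λ => (inner ℂ (m l) f : ℂ)) 2 := by
    intro f
    refine memℓp_gen ?_
    rw [h2R]
    exact (hsum' f).congr fun l => by rw [Real.rpow_natCast]
  -- squared norm on ℓ²
  have norm_sq : ∀ x : lp (fun _ : Λ => ℂ) 2, ‖x‖ ^ 2 = ∑' l, ‖x l‖ ^ 2 := by
    intro x
    have h := lp.norm_rpow_eq_tsum (p := 2) (by norm_num) x
    rw [h2R] at h
    simpa [Real.rpow_natCast] using h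
  -- the analysis operator
  have hAle : ∀ f : H,
      ‖(⟨fun l => (inner ℂ (m l) f : ℂ), memA f⟩ : lp (fun _ : Λ => ℂ) 2)‖ ≤ b * ‖f‖ := by
    intro f
    have h1 : ‖(⟨fun l => (inner ℂ (m l) f : ℂ), memA f⟩ : lp (fun _ : Λ => ℂ) 2)‖ ^ 2
        = ∑' l : Λ, ‖(inner ℂ f (m l) : ℂ)‖ ^ 2 := by
      rw [norm_sq]
      exact htsum' f
    have h2 : ‖(⟨fun l => (inner ℂ (m l) f : ℂ), memA f⟩ : lp (fun _ : Λ => ℂ) 2)‖ ^ 2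
        ≤ (b * ‖f‖) ^ 2 := by
      rw [h1, mul_pow]
      exact (hframe f).2
    have h3 : (0:ℝ) ≤ ‖(⟨fun l => (inner ℂ (m l) f : ℂ), memA f⟩ : lp (fun _ : Λ => ℂ) 2)‖ :=
      norm_nonneg _
    have h4 : (0:ℝ) ≤ b * ‖f‖ := mul_nonneg hb.le (norm_nonneg _)
    nlinarith
  let A : H →L[ℂ] lp (fun _ : Λ => ℂ) 2 :=
    LinearMap.mkContinuous
      { toFun := fun f => ⟨fun l => (inner ℂ (m l) f : ℂ), memA f⟩
        map_add' := by
          intro f g; apply lp.ext; funext l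
          simp only [lp.coeFn_add, Pi.add_apply]
          exact inner_add_right _ _ _
        map_smul' := by
          intro c f; apply lp.ext; funext l
          simp only [lp.coeFn_smul, Pi.smul_apply, RingHom.id_apply, smul_eq_mul]
          exact inner_smul_right _ _ _ }
      b hAle
  have hA : ∀ (f : H) (l : Λ), A f l = (inner ℂ (m l) f : ℂ) := fun f l => rfl
  set B : lp (fun _ : Λ => ℂ) 2 →L[ℂ] H := ContinuousLinearMap.adjoint A with hBdef
  -- S = B ∘ A
  have hBA : ∀ f : H, B (A f) = S f := by
    intro f
    refine ext_inner_left ℂ fun g => ?_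
    rw [hBdef, adjoint_inner_right, lp.inner_eq_tsum]
    have h1 : HasSum (fun l : Λ => (inner ℂ g (m l) : ℂ) * (inner ℂ (m l) f : ℂ))
        (inner ℂ g (S f) : ℂ) := by
      have := (innerSL ℂ g).hasSum (hS f)
      simpa [inner_smul_right, mul_comm] using this
    rw [← h1.tsum_eq]
    refine tsum_congr fun l => ?_
    rw [hA, hA, RCLike.inner_apply, ← inner_conj_symm (m l) g]
    simp [mul_comm]
  -- coercivity
  have hcoer : ∀ f : H, a ^ 2 * ‖f‖ ^ 2 ≤ (RCLike.re (inner ℂ f (S f) : ℂ)) := by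
    intro f
    have h1 : (inner ℂ f (S f) : ℂ) = inner ℂ (A f) (A f) := by
      rw [← hBA f, hBdef, adjoint_inner_right]
    have h2 : RCLike.re (inner ℂ f (S f) : ℂ) = ‖A f‖ ^ 2 := by
      rw [h1, ← @inner_self_eq_norm_sq ℂ]
    rw [h2, norm_sq]
    calc a ^ 2 * ‖f‖ ^ 2 ≤ ∑' l : Λ, ‖(inner ℂ f (m l) : ℂ)‖ ^ 2 := (hframe f).1
      _ = ∑' l : Λ, ‖A f l‖ ^ 2 := by
          refine tsum_congr fun l => ?_
          rw [hA, norm_inner_symm]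
  -- S is injective
  have hinj : ∀ f : H, S f = 0 → f = 0 := by
    intro f hf
    have h1 : a ^ 2 * ‖f‖ ^ 2 ≤ 0 := by
      have := hcoer f
      rw [hf] at this
      simpa using this
    have h2 : ‖f‖ ^ 2 ≤ 0 := by nlinarith [pow_pos ha 2]
    have : ‖f‖ = 0 := by nlinarith [norm_nonneg f, sq_nonneg ‖f‖]
    exact norm_eq_zero.mp this
  -- S is bounded below
  have hbelow : ∀ f : H, a ^ 2 * ‖f‖ ≤ ‖S f‖ := by
    intro f
    rcases eq_or_ne f 0 with rfl | hf
    · simp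
    have h1 : a ^ 2 * ‖f‖ ^ 2 ≤ ‖(inner ℂ f (S f) : ℂ)‖ := by
      refine le_trans (hcoer f) ?_
      exact RCLike.re_le_norm _
    have h2 : ‖(inner ℂ f (S f) : ℂ)‖ ≤ ‖f‖ * ‖S f‖ := norm_inner_le_norm _ _
    have hfpos : 0 < ‖f‖ := norm_pos_iff.mpr hf
    nlinarith
  -- closed range of S
  have ha2 : (0:ℝ) < a ^ 2 := pow_pos ha 2
  have hanti : AntilipschitzWith (⟨(a ^ 2)⁻¹, by positivity⟩ : ℝ≥0) S := by
    refine S.antilipschitz_of_bound fun x => ?_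
    show ‖x‖ ≤ (a ^ 2)⁻¹ * ‖S x‖
    calc ‖x‖ = (a ^ 2)⁻¹ * (a ^ 2 * ‖x‖) := by field_simp
      _ ≤ (a ^ 2)⁻¹ * ‖S x‖ :=
          mul_le_mul_of_nonneg_left (hbelow x) (by positivity)
  have hclosed : IsClosed (Set.range S) := hanti.isClosed_range S.uniformContinuous
  have hker : LinearMap.ker (S : H →ₗ[ℂ] H) = ⊥ := by
    rw [LinearMap.ker_eq_bot']
    intro x hx
    exact hinj x hx
  have hrange : LinearMap.range (S : H →ₗ[ℂ] H) = ⊤ := by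
    have hKc : IsClosed ((LinearMap.range (S : H →ₗ[ℂ] H) : Submodule ℂ H) : Set H) := by
      have : ((LinearMap.range (S : H →ₗ[ℂ] H) : Submodule ℂ H) : Set H) = Set.range S :=
        LinearMap.coe_range _
      rw [this]; exact hclosed
    haveI : CompleteSpace (LinearMap.range (S : H →ₗ[ℂ] H) : Submodule ℂ H) := hKc.completeSpace_coe
    rw [← Submodule.orthogonal_eq_bot_iff]
    rw [Submodule.eq_bot_iff]
    intro x hx
    have hx' : (inner ℂ (S x) x : ℂ) = 0 :=
      (Submodule.mem_orthogonal _ x).mp hx (S x) ⟨x, rfl⟩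
    have h1 : RCLike.re (inner ℂ x (S x) : ℂ) = 0 := by
      rw [inner_re_symm, hx']
      simp
    have h2 := hcoer x
    rw [h1] at h2
    have h3 : ‖x‖ ^ 2 ≤ 0 := by nlinarith [pow_pos ha 2]
    have : ‖x‖ = 0 := by nlinarith [norm_nonneg x, sq_nonneg ‖x‖]
    exact norm_eq_zero.mp this
  -- the inverse of S
  let E := ContinuousLinearEquiv.ofBijective S hker hrange
  let P : H →L[ℂ] H := (E.symm : H →L[ℂ] H)
  have hES : ∀ x, E x = S x :=
    fun x => congrFun (ContinuousLinearEquiv.coeFn_ofBijective S hker hrange) x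
  have hSP : ∀ x, S (P x) = x := fun x => by
    rw [show P x = E.symm x from rfl, ← hES]
    exact E.apply_symm_apply x
  have hPS : ∀ x, P (S x) = x := fun x => by
    rw [show P (S x) = E.symm (S x) from rfl, ← hES x]
    exact E.symm_apply_apply x
  -- self-adjointness of S and P
  have hSsa : ContinuousLinearMap.adjoint S = S := by
    have h : S = B ∘L A := by ext f; exact (hBA f).symm
    rw [h, hBdef, adjoint_comp, adjoint_adjoint]
  have h1c : S ∘L P = ContinuousLinearMap.id ℂ H := by
    ext x; exact hSP x
  have h2c : P ∘L S = ContinuousLinearMap.id ℂ H := by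
    ext x; exact hPS x
  have hPsa : ContinuousLinearMap.adjoint P = P := by
    have h3 : ContinuousLinearMap.adjoint P ∘L ContinuousLinearMap.adjoint S
        = ContinuousLinearMap.id ℂ H := by
      rw [← adjoint_comp, h1c, adjoint_id]
    calc ContinuousLinearMap.adjoint P
        = ContinuousLinearMap.adjoint P ∘L (S ∘L P) := by rw [h1c, comp_id]
      _ = (ContinuousLinearMap.adjoint P ∘L S) ∘L P := by rw [comp_assoc]
      _ = (ContinuousLinearMap.adjoint P ∘L ContinuousLinearMap.adjoint S) ∘L P := by
            rw [hSsa]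
      _ = P := by rw [h3, id_comp]
  -- the dual analysis operator
  have hAt : ∀ (f : H) (l : Λ), A (P f) l = (inner ℂ (mt l) f : ℂ) := by
    intro f l
    rw [hA]
    have h1 : (inner ℂ (m l) (P f) : ℂ) = inner ℂ (S (mt l)) (P f) := by rw [hmt]
    rw [h1, ← hSsa, adjoint_inner_left, hSP]
  -- identification of G and Gt
  have hGAB : ∀ c, G c = A (B c) := by
    intro c
    apply lp.ext; funext l
    rw [hG, hA, hBdef, adjoint_inner_right, lp.inner_eq_tsum]
    refine tsum_congr fun l' => ?_
    rw [RCLike.inner_apply, hA, inner_conj_symm, mul_comm]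
  have hGtc : ∀ c, Gt c = A (P (P (B c))) := by
    intro c
    apply lp.ext; funext l
    rw [hGt]
    rw [show (A (P (P (B c))) : ∀ _ : Λ, ℂ) l = (inner ℂ (mt l) (P (B c)) : ℂ) from hAt _ l]
    conv_rhs => rw [← hPsa]
    rw [adjoint_inner_right, hBdef, adjoint_inner_right, lp.inner_eq_tsum]
    refine tsum_congr fun l' => ?_
    rw [RCLike.inner_apply, hAt, inner_conj_symm, mul_comm]
  -- pointwise identities
  have e1 : ∀ c, Gt (G c) = A (P (B c)) := by
    intro c
    rw [hGAB c, hGtc, hBA, hPS]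
  have e2 : ∀ c, G (Gt c) = A (P (B c)) := by
    intro c
    rw [hGtc c, hGAB, hBA, hSP]
  have hsa : IsSelfAdjoint (A ∘L (P ∘L B)) := by
    rw [isSelfAdjoint_iff', hBdef, adjoint_comp, adjoint_comp, adjoint_adjoint, hPsa,
      ← comp_assoc]
  refine ⟨?_, ?_, ?_, ?_⟩
  · refine ContinuousLinearMap.ext fun c => ?_
    show G (Gt (G c)) = G c
    rw [e2 (G c), hGAB c, hBA, hPS, ← hGAB]
  · refine ContinuousLinearMap.ext fun c => ?_
    show Gt (G (Gt c)) = Gt c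
    rw [e1 (Gt c), hGtc c, hBA, hSP, ← hGtc]
  · have h : G ∘L Gt = A ∘L (P ∘L B) := ContinuousLinearMap.ext e2
    rw [h]; exact hsa
  · have h : Gt ∘L G = A ∘L (P ∘L B) := ContinuousLinearMap.ext e1
    rw [h]; exact hsa
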